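/- Trace identities for chiral resolvents (Lemma 7.5). Let N ≥ 1, let X ∈ ℂ^{N×N} be any matrix, z ∈ ℂ, w ∈ ℂ∖ℝ, and set G := (H^z − w)^{−1} (this inverse exists since H^z is Hermitian and w ∉ ℝ). Then for every integer n ≥ 1: (i) ⟨(G·E₋)^{2n−1}⟩ = 0; (ii) ⟨(G·E₋)^{2n}⟩ = 2·Σ_{s=0}^{n−1} (−1)^{s+1}·binom(2n−2−s, n−1)·⟨G^{s+1}⟩/(2w)^{2n−s−1}. -/

import Mathlib

open MeasureTheory ProbabilityTheory Filter Matrix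
open scoped ENNReal NNReal

noncomputable section

namespace RMT

/-- Normalized trace `⟨A⟩ := (card m)⁻¹ · Tr A` of a square complex matrix. -/
def ntr {m : Type*} [Fintype m] (A : Matrix m m ℂ) : ℂ :=
  (Fintype.card m : ℂ)⁻¹ * A.trace

/-- The `ℓ² → ℓ²` operator norm of a square complex matrix. -/
def opn {m : Type*} [Fintype m] [DecidableEq m] (A : Matrix m m ℂ) : ℝ :=
  ‖Matrix.toEuclideanCLM (𝕜 := ℂ) A‖

/-- The Hermitization `H^z = [[0, X−z],[(X−z)^*,0]]` of `X − z`. -/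
def herm {N : ℕ} (X : Matrix (Fin N) (Fin N) ℂ) (z : ℂ) :
    Matrix (Fin N ⊕ Fin N) (Fin N ⊕ Fin N) ℂ :=
  Matrix.fromBlocks 0 (X - z • 1) (X - z • 1)ᴴ 0

/-- The resolvent `G^z(w) = (H^z − w)⁻¹` of the Hermitization. -/
def resolv {N : ℕ} (X : Matrix (Fin N) (Fin N) ℂ) (z w : ℂ) :
    Matrix (Fin N ⊕ Fin N) (Fin N ⊕ Fin N) ℂ :=
  (herm X z - w • 1)⁻¹

/-- Number of eigenvalues (roots of the characteristic polynomial, with multiplicity)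
lying in a set `S ⊆ ℂ`. -/
def eigCountIn {N : ℕ} (A : Matrix (Fin N) (Fin N) ℂ) (S : Set ℂ) : ℕ :=
  letI : DecidablePred fun ζ : ℂ => ζ ∈ S := fun _ => Classical.propDecidable _
  Multiset.card (Multiset.filter (fun ζ : ℂ => ζ ∈ S) A.charpoly.roots)

/-- Linear eigenvalue statistics `Σ_i g(σ_i)` (complex-valued test function). -/
def linStatC {N : ℕ} (A : Matrix (Fin N) (Fin N) ℂ) (g : ℂ → ℂ) : ℂ :=
  (Multiset.map g A.charpoly.roots).sum

/-- Linear eigenvalue statistics `Σ_i g(σ_i)` (real-valued test function). -/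
def linStatR {N : ℕ} (A : Matrix (Fin N) (Fin N) ℂ) (g : ℂ → ℝ) : ℝ :=
  (Multiset.map g A.charpoly.roots).sum

/-- `m^z(w)`: the unique solution of `−1/m = w + m − |z|²/(w+m)` with `Im m · Im w > 0`. -/
def mSol (z w : ℂ) : ℂ :=
  Classical.epsilon fun m : ℂ =>
    -m⁻¹ = w + m - ((‖z‖ ^ 2 : ℝ) : ℂ) / (w + m) ∧ 0 < m.im * w.im

/-- `u^z(w) := m^z(w)/(w + m^z(w))`. -/
def uSol (z w : ℂ) : ℂ := mSol z w / (w + mSol z w)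

/-- Self-consistent density of states `ρ^z(E) = lim_{η↓0} π⁻¹ |Im m^z(E+iη)|`. -/
def rhoDen (z : ℂ) (E : ℝ) : ℝ :=
  limUnder (nhdsWithin (0 : ℝ) (Set.Ioi 0))
    fun η : ℝ => |(mSol z ((E : ℂ) + (η : ℂ) * Complex.I)).im| / Real.pi

/-- The `κ`-bulk `𝐁_κ^z := {E : ρ^z(E) ≥ κ}`. -/
def bulk (κ : ℝ) (z : ℂ) : Set ℝ := {E : ℝ | κ ≤ rhoDen z E}

/-- `E₊ = I_{2N}`. -/
def Ep (N : ℕ) : Matrix (Fin N ⊕ Fin N) (Fin N ⊕ Fin N) ℂ := 1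

/-- `E₋ = diag(I_N, −I_N)`. -/
def Em (N : ℕ) : Matrix (Fin N ⊕ Fin N) (Fin N ⊕ Fin N) ℂ :=
  Matrix.fromBlocks 1 0 0 (-1)

/-- `F = [[0, I_N],[0,0]]`. -/
def Fobs (N : ℕ) : Matrix (Fin N ⊕ Fin N) (Fin N ⊕ Fin N) ℂ :=
  Matrix.fromBlocks 0 1 0 0

/-- The span of the observables `E₊, E₋, F, F^*`. -/
def obsSpan (N : ℕ) : Submodule ℂ (Matrix (Fin N ⊕ Fin N) (Fin N ⊕ Fin N) ℂ) :=
  Submodule.span ℂ {Ep N, Em N, Fobs N, (Fobs N)ᴴ}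

/-- The deterministic approximation `M^z(w)` with blocks
`[[m·I, −z u·I],[−conj z u·I, m·I]]`. -/
def MMat (N : ℕ) (z w : ℂ) : Matrix (Fin N ⊕ Fin N) (Fin N ⊕ Fin N) ℂ :=
  Matrix.fromBlocks (mSol z w • 1) ((-(z * uSol z w)) • 1)
    ((-((starRingEnd ℂ) z * uSol z w)) • 1) (mSol z w • 1)

/-- Self-energy operator `𝒮[R] := ⟨R E₊⟩E₊ − ⟨R E₋⟩E₋`. -/
def SOp {N : ℕ} (R : Matrix (Fin N ⊕ Fin N) (Fin N ⊕ Fin N) ℂ) :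
    Matrix (Fin N ⊕ Fin N) (Fin N ⊕ Fin N) ℂ :=
  ntr (R * Ep N) • Ep N - ntr (R * Em N) • Em N

/-- Two-body stability operator `ℬ₁₂[R] := R − M₁ 𝒮[R] M₂`. -/
def calB {N : ℕ} (M₁ M₂ R : Matrix (Fin N ⊕ Fin N) (Fin N ⊕ Fin N) ℂ) :
    Matrix (Fin N ⊕ Fin N) (Fin N ⊕ Fin N) ℂ :=
  R - M₁ * SOp R * M₂

/-- Deterministic two-resolvent approximation `M₁₂^B := ℬ₁₂⁻¹[M₁ B M₂]`. -/
def M12 (N : ℕ) (z₁ w₁ z₂ w₂ : ℂ) (B : Matrix (Fin N ⊕ Fin N) (Fin N ⊕ Fin N) ℂ) :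
    Matrix (Fin N ⊕ Fin N) (Fin N ⊕ Fin N) ℂ :=
  Function.invFun (calB (MMat N z₁ w₁) (MMat N z₂ w₂)) (MMat N z₁ w₁ * B * MMat N z₂ w₂)

/-- The stability control parameter `β̂₁₂(w₁,w₂)`. -/
def betaHat (N : ℕ) (z₁ z₂ w₁ w₂ : ℂ) : ℝ :=
  sInf {v : ℝ | ∃ w₁' ∈ ({w₁, (starRingEnd ℂ) w₁} : Set ℂ),
    ∃ w₂' ∈ ({w₂, (starRingEnd ℂ) w₂} : Set ℂ),
    ∃ R ∈ obsSpan N, opn R = 1 ∧ v = opn (calB (MMat N z₁ w₁') (MMat N z₂ w₂') R)}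

/-- Covariance `Cov(f,g) := 𝔼[(f−𝔼f)·conj(g−𝔼g)]` of two complex random variables. -/
def ccov {Ωs : Type*} [MeasureSpace Ωs] (f g : Ωs → ℂ) : ℂ :=
  ∫ ω, (f ω - ∫ ω', f ω') * (starRingEnd ℂ) (g ω - ∫ ω', g ω')

instance matMS {m n α : Type*} [MeasurableSpace α] : MeasurableSpace (Matrix m n α) :=
  inferInstanceAs (MeasurableSpace (m → n → α))

/-- A complex `N×N` i.i.d. matrix with normalized single-entry distribution `μ` (the law of `χ`)
satisfying Assumption 2.1: entries independent, each distributed as `N^{-1/2}·χ`,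
`𝔼χ = 0`, `𝔼|χ|² = 1`, `𝔼χ² = 0`, `𝔼|χ|^p ≤ C_p`, and `χ` has a density
`ρ_χ ∈ L^{1+𝔞}(ℂ)` with `‖ρ_χ‖_{1+𝔞} ≤ N^𝔟`. -/
structure CplxIID (Cp : ℕ → ℝ) (𝔞 𝔟 : ℝ) (N : ℕ) {Ωs : Type*} [MeasureSpace Ωs]
    (X : Ωs → Matrix (Fin N) (Fin N) ℂ) (μ : Measure ℂ) : Prop where
  probΩ : IsProbabilityMeasure (volume : Measure Ωs)
  probμ : IsProbabilityMeasure μ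
  mean_zero : (∫ ζ, ζ ∂μ) = 0
  absSq_one : (∫⁻ ζ, (‖ζ‖₊ : ℝ≥0∞) ^ 2 ∂μ) = 1
  sq_zero : (∫ ζ, ζ ^ 2 ∂μ) = 0
  moments : ∀ p : ℕ, (∫⁻ ζ, (‖ζ‖₊ : ℝ≥0∞) ^ p ∂μ) ≤ ENNReal.ofReal (Cp p)
  density : ∃ ρχ : ℂ → ℝ≥0∞, Measurable ρχ ∧ μ = volume.withDensity ρχ ∧
      eLpNorm (fun ζ => (ρχ ζ).toReal) (ENNReal.ofReal (1 + 𝔞)) volume ≤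
        ENNReal.ofReal ((N : ℝ) ^ 𝔟)
  indep : iIndepFun (m := fun _ : Fin N × Fin N => inferInstance)
      (fun p ω => X ω p.1 p.2) (volume : Measure Ωs)
  entry_law : ∀ p : Fin N × Fin N,
      Measure.map (fun ω => X ω p.1 p.2) (volume : Measure Ωs) =
        Measure.map (fun ζ : ℂ => (Real.sqrt N)⁻¹ • ζ) μ

/-- A real `N×N` i.i.d. matrix with normalized single-entry distribution `μ` (the law of `χ`). -/
structure RealIID (Cp : ℕ → ℝ) (𝔞 𝔟 : ℝ) (N : ℕ) {Ωs : Type*} [MeasureSpace Ωs]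
    (X : Ωs → Matrix (Fin N) (Fin N) ℝ) (μ : Measure ℝ) : Prop where
  probΩ : IsProbabilityMeasure (volume : Measure Ωs)
  probμ : IsProbabilityMeasure μ
  mean_zero : (∫ x, x ∂μ) = 0
  sq_one : (∫⁻ x, (‖x‖₊ : ℝ≥0∞) ^ 2 ∂μ) = 1
  moments : ∀ p : ℕ, (∫⁻ x, (‖x‖₊ : ℝ≥0∞) ^ p ∂μ) ≤ ENNReal.ofReal (Cp p)
  density : ∃ ρχ : ℝ → ℝ≥0∞, Measurable ρχ ∧ μ = volume.withDensity ρχ ∧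
      eLpNorm (fun x => (ρχ x).toReal) (ENNReal.ofReal (1 + 𝔞)) volume ≤
        ENNReal.ofReal ((N : ℝ) ^ 𝔟)
  indep : iIndepFun (m := fun _ : Fin N × Fin N => inferInstance)
      (fun p ω => X ω p.1 p.2) (volume : Measure Ωs)
  entry_law : ∀ p : Fin N × Fin N,
      Measure.map (fun ω => X ω p.1 p.2) (volume : Measure Ωs) =
        Measure.map (fun x : ℝ => (Real.sqrt N)⁻¹ • x) μ

/-- The standard complex Gaussian law: the law of `(g₁ + i g₂)/√2` with `g₁, g₂`
independent standard real Gaussians. -/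
def stdCplxGaussian : Measure ℂ :=
  Measure.map (fun p : ℝ × ℝ => (p.1 : ℂ) + (p.2 : ℂ) * Complex.I)
    ((gaussianReal 0 (1 / 2)).prod (gaussianReal 0 (1 / 2)))

/-- A complex Ginibre (GinUE) matrix: i.i.d. entries with `√N·x̃_{ab}` standard complex
Gaussian. -/
structure GinUE (N : ℕ) {Ωs : Type*} [MeasureSpace Ωs]
    (X : Ωs → Matrix (Fin N) (Fin N) ℂ) : Prop where
  indep : iIndepFun (m := fun _ : Fin N × Fin N => inferInstance)
      (fun p ω => X ω p.1 p.2) (volume : Measure Ωs)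
  entry_law : ∀ p : Fin N × Fin N,
      Measure.map (fun ω => X ω p.1 p.2) (volume : Measure Ωs) =
        Measure.map (fun ζ : ℂ => (Real.sqrt N)⁻¹ • ζ) stdCplxGaussian

/-- Assumption 2.2 on the domain `Ω_N = N^{-α}·Ω̃_N`. -/
structure DomainAssumption (δ α cd Cd K : ℝ) (N : ℕ) (ΩN Ωt : Set ℂ) : Prop where
  isOpen : IsOpen ΩN
  simplyConnected : SimplyConnectedSpace ↥ΩN
  subset_disk : ΩN ⊆ Metric.ball (0 : ℂ) (1 - δ)
  rescaled : ΩN = (fun ζ : ℂ => ((N : ℝ) ^ (-α) : ℝ) • ζ) '' Ωt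
  diam_lower : cd ≤ Metric.diam Ωt
  diam_upper : Metric.diam Ωt ≤ Cd
  boundary : ∃ (L : ℝ) (γ : ℝ → ℂ), 0 < L ∧ ContDiff ℝ 2 γ ∧ Function.Periodic γ L ∧
      Set.range γ = frontier Ωt ∧ Set.InjOn γ (Set.Ico 0 L) ∧
      (∀ t : ℝ, ‖deriv γ t‖ = 1) ∧ (∀ t : ℝ, ‖deriv (deriv γ) t‖ ≤ K)

/-- Assumptions 2.2 and 2.5 on the domain, real case: additionally the boundary meets the real
axis transversally (tangent angle at least `φ₀`) and near the real axis every connected component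
of the boundary meets the real axis. -/
structure DomainAssumptionReal (δ α cd Cd K φ₀ d₀ : ℝ) (N : ℕ) (ΩN Ωt : Set ℂ) : Prop where
  isOpen : IsOpen ΩN
  simplyConnected : SimplyConnectedSpace ↥ΩN
  subset_disk : ΩN ⊆ Metric.ball (0 : ℂ) (1 - δ)
  rescaled : ΩN = (fun ζ : ℂ => ((N : ℝ) ^ (-α) : ℝ) • ζ) '' Ωt
  diam_lower : cd ≤ Metric.diam Ωt
  diam_upper : Metric.diam Ωt ≤ Cd
  boundary : ∃ (L : ℝ) (γ : ℝ → ℂ), 0 < L ∧ ContDiff ℝ 2 γ ∧ Function.Periodic γ L ∧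
      Set.range γ = frontier Ωt ∧ Set.InjOn γ (Set.Ico 0 L) ∧
      (∀ t : ℝ, ‖deriv γ t‖ = 1) ∧ (∀ t : ℝ, ‖deriv (deriv γ) t‖ ≤ K) ∧
      (∀ t : ℝ, (γ t).im = 0 → Real.sin φ₀ ≤ |(deriv γ t).im|)
  strip : ∀ ζ ∈ frontier Ωt ∩ {ζ : ℂ | |ζ.im| ≤ d₀},
      ∃ ζ' ∈ connectedComponentIn (frontier Ωt ∩ {ζ : ℂ | |ζ.im| ≤ d₀}) ζ, ζ'.im = 0


/-- `U_l := −(1/√2)·∂_w (m^z(w))²`. -/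
def Ufac (z w : ℂ) : ℂ :=
  -((Real.sqrt 2 : ℂ))⁻¹ * deriv (fun w' => (mSol z w') ^ 2) w

/-- `h(w₁,w₂) := 1 + (u₁u₂|z₁||z₂|)² − m₁²m₂² − 2u₁u₂·Re(z₁·conj z₂)`. -/
def hfun (z₁ z₂ w₁ w₂ : ℂ) : ℂ :=
  1 + (uSol z₁ w₁ * uSol z₂ w₂ * ((‖z₁‖ : ℝ) : ℂ) * ((‖z₂‖ : ℝ) : ℂ)) ^ 2 -
    (mSol z₁ w₁) ^ 2 * (mSol z₂ w₂) ^ 2 -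
    2 * uSol z₁ w₁ * uSol z₂ w₂ * (((z₁ * (starRingEnd ℂ) z₂).re : ℝ) : ℂ)

/-- `V₁₂ := −(1/2)·∂_{w₁}[(∂_{w₂}h)/h]`. -/
def V12 (z₁ z₂ w₁ w₂ : ℂ) : ℂ :=
  -(1 / 2 : ℂ) *
    deriv (fun w₁' => (deriv (fun w₂' => hfun z₁ z₂ w₁' w₂') w₂) / hfun z₁ z₂ w₁' w₂) w₁

/-- `LT := |E₁| − |E₂| − sgn(E₁)·(Im u₁/Im m₁)·Re[conj(z₁)(z₁−z₂)]`. -/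
def LTpar (z₁ z₂ w₁ w₂ : ℂ) : ℝ :=
  |w₁.re| - |w₂.re| -
    Real.sign w₁.re * ((uSol z₁ w₁).im / (mSol z₁ w₁).im) *
      ((starRingEnd ℂ) z₁ * (z₁ - z₂)).re

/-- `γ := |z₁−z₂|² + |LT| + (|E₁|−|E₂|)² + η₁ + η₂`. -/
def gammaPar (z₁ z₂ w₁ w₂ : ℂ) : ℝ :=
  ‖z₁ - z₂‖ ^ 2 + |LTpar z₁ z₂ w₁ w₂| + (|w₁.re| - |w₂.re|) ^ 2 + |w₁.im| + |w₂.im|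

/-- `κ₄ := 𝔼|χ|⁴ − 2`. -/
def kappa4 (μ : Measure ℂ) : ℝ := (∫ ζ, ‖ζ‖ ^ 4 ∂μ) - 2

/-- Smallest singular value of `A`: the square root of the least eigenvalue of `Aᴴ·A`. -/
def smin {N : ℕ} (A : Matrix (Fin N) (Fin N) ℂ) : ℝ :=
  Real.sqrt (⨅ i : Fin N, (Matrix.isHermitian_conjTranspose_mul_self A).eigenvalues i)

/-- The `i`-th smallest singular value of `A` (`i = 1, …, N`). -/
def sval {N : ℕ} (A : Matrix (Fin N) (Fin N) ℂ) (i : ℕ) : ℝ :=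
  ((Multiset.map (fun k => Real.sqrt ((Matrix.isHermitian_conjTranspose_mul_self A).eigenvalues k))
      (Finset.univ : Finset (Fin N)).val).sort (· ≤ ·)).getD (i - 1) 0

/-- `𝓔₀(t) := N⁻¹(1/√(Nt) + t)`. -/
def E0fun (N : ℕ) (t : ℝ) : ℝ := ((N : ℝ))⁻¹ * (1 / Real.sqrt ((N : ℝ) * t) + t)

/-- `𝓔₁(t,R) := √(t/N)·(R^{−1/8} + √(R/(N|z₁−z₂|²))) + √(Nt³)/R`. -/
def E1fun (N : ℕ) (z₁ z₂ : ℂ) (t R : ℝ) : ℝ :=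
  Real.sqrt (t / (N : ℝ)) * (R ^ (-(1 : ℝ) / 8) + Real.sqrt (R / ((N : ℝ) * ‖z₁ - z₂‖ ^ 2))) +
    Real.sqrt ((N : ℝ) * t ^ 3) / R

/-- Resolvent chain `G^{z₁}(w₁) B₁ G^{z₂}(w₂) ⋯ B_{k−1} G^{z_k}(w_k)`. -/
def Gchain {N : ℕ} (X : Matrix (Fin N) (Fin N) ℂ) :
    List (ℂ × ℂ) → List (Matrix (Fin N ⊕ Fin N) (Fin N ⊕ Fin N) ℂ) →
      Matrix (Fin N ⊕ Fin N) (Fin N ⊕ Fin N) ℂ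
  | [d], [] => resolv X d.1 d.2
  | d :: ds, B :: bs => resolv X d.1 d.2 * B * Gchain X ds bs
  | _, _ => 1

/-- Fuelled recursion for the deterministic approximation of a resolvent chain. -/
def MchainAux (N : ℕ) :
    ℕ → List (ℂ × ℂ) → List (Matrix (Fin N ⊕ Fin N) (Fin N ⊕ Fin N) ℂ) →
      Matrix (Fin N ⊕ Fin N) (Fin N ⊕ Fin N) ℂ
  | _, [d], [] => MMat N d.1 d.2
  | fuel + 1, d :: d' :: ds, B :: bs =>
      Function.invFun
        (calB (MMat N d.1 d.2)
          (MMat N ((d' :: ds).getLast (List.cons_ne_nil _ _)).1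
            ((d' :: ds).getLast (List.cons_ne_nil _ _)).2))
        (MMat N d.1 d.2 * B * MchainAux N fuel (d' :: ds) bs +
          ∑ j ∈ Finset.Icc 2 ((d :: d' :: ds).length - 1),
            MMat N d.1 d.2 *
                SOp (MchainAux N fuel ((d :: d' :: ds).take j) ((B :: bs).take (j - 1))) *
              MchainAux N fuel ((d :: d' :: ds).drop (j - 1)) ((B :: bs).drop (j - 1)))
  | _, _, _ => 0

/-- Deterministic approximation `M_{[k]}^{B₁,…,B_{k−1}}` of the chain with data `l` and
observables `m`, defined by the recursion (4.18) of the paper. -/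
def Mchain (N : ℕ) (l : List (ℂ × ℂ))
    (m : List (Matrix (Fin N ⊕ Fin N) (Fin N ⊕ Fin N) ℂ)) :
    Matrix (Fin N ⊕ Fin N) (Fin N ⊕ Fin N) ℂ :=
  MchainAux N l.length l m

/-- `η_* := min(η₁, …, η_k, 1)` where `η_l = |Im w_l|`. -/
def etaStar {k : ℕ} (ws : Fin k → ℂ) : ℝ :=
  sInf (insert (1 : ℝ) (Set.range fun l => |(ws l).im|))

/-- Resolvent `(D − w)⁻¹` of a deterministic Hermitian matrix. -/
def resD {n : ℕ} (D : Matrix (Fin n) (Fin n) ℂ) (w : ℂ) : Matrix (Fin n) (Fin n) ℂ :=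
  (D - w • 1)⁻¹

/-- `Im A := (A − A^*)/(2i)`. -/
def imPart {m : Type*} [Fintype m] (A : Matrix m m ℂ) : Matrix m m ℂ :=
  (2 * Complex.I)⁻¹ • (A - Aᴴ)

/-- `β₁₂,* := min(|β₁₂,₊|, |β₁₂,₋|)` with
`β₁₂,± := 1 − Re(z₁·conj z₂)u₁u₂ ± √(m₁²m₂² − (Im(z₁·conj z₂))²u₁²u₂²)`
(independent of the choice of complex square root). -/
def betaStar (z₁ z₂ w₁ w₂ : ℂ) : ℝ :=
  min
    ‖(1 : ℂ) - (((z₁ * (starRingEnd ℂ) z₂).re : ℝ) : ℂ) * uSol z₁ w₁ * uSol z₂ w₂ +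
      ((mSol z₁ w₁) ^ 2 * (mSol z₂ w₂) ^ 2 -
          ((((z₁ * (starRingEnd ℂ) z₂).im : ℝ) : ℂ)) ^ 2 * (uSol z₁ w₁) ^ 2 * (uSol z₂ w₂) ^ 2) ^
        ((1 : ℂ) / 2)‖
    ‖(1 : ℂ) - (((z₁ * (starRingEnd ℂ) z₂).re : ℝ) : ℂ) * uSol z₁ w₁ * uSol z₂ w₂ -
      ((mSol z₁ w₁) ^ 2 * (mSol z₂ w₂) ^ 2 -
          ((((z₁ * (starRingEnd ℂ) z₂).im : ℝ) : ℂ)) ^ 2 * (uSol z₁ w₁) ^ 2 * (uSol z₂ w₂) ^ 2) ^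
        ((1 : ℂ) / 2)‖

/-- `min over w₁' ∈ {w₁, conj w₁}, w₂' ∈ {w₂, conj w₂} of min(β₁₂,*(w₁',w₂'), 1)`. -/
def betaStarMin (z₁ z₂ w₁ w₂ : ℂ) : ℝ :=
  min
    (min (min (betaStar z₁ z₂ w₁ w₂) (betaStar z₁ z₂ w₁ ((starRingEnd ℂ) w₂)))
      (min (betaStar z₁ z₂ ((starRingEnd ℂ) w₁) w₂)
        (betaStar z₁ z₂ ((starRingEnd ℂ) w₁) ((starRingEnd ℂ) w₂))))
    1

/-- The `2N×2N` matrix `Z` with blocks `[[0, z·I],[conj z·I, 0]]`. -/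
def Zmat (N : ℕ) (z : ℂ) : Matrix (Fin N ⊕ Fin N) (Fin N ⊕ Fin N) ℂ :=
  Matrix.fromBlocks 0 (z • 1) (((starRingEnd ℂ) z) • 1) 0


section helpers
open Finset
open scoped ComplexOrder

lemma RMTaux.isUnit_det_sub_smul {n : Type*} [Fintype n] [DecidableEq n]
    {M : Matrix n n ℂ} (hM : M.IsHermitian)
    {w : ℂ} (hw : w.im ≠ 0) : IsUnit (M - w • 1).det := by
  rw [isUnit_iff_ne_zero]
  intro hdet
  obtain ⟨v, hv, hv0⟩ := (Matrix.exists_mulVec_eq_zero_iff).mpr hdet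
  have hMv : M *ᵥ v = w • v := by
    rw [Matrix.sub_mulVec, Matrix.smul_mulVec, Matrix.one_mulVec, sub_eq_zero] at hv0
    exact hv0
  have key : star (star v ⬝ᵥ (M *ᵥ v)) = star v ⬝ᵥ (M *ᵥ v) := by
    rw [← Matrix.star_dotProduct, Matrix.star_mulVec, hM.eq]
    exact (Matrix.dotProduct_mulVec _ _ _).symm
  have hvv : star (star v ⬝ᵥ v) = star v ⬝ᵥ v := (Matrix.star_dotProduct v v).symm
  rw [hMv, dotProduct_smul, star_smul, hvv] at key
  have hne : star v ⬝ᵥ v ≠ 0 := by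
    intro h
    exact hv (dotProduct_star_self_eq_zero.mp h)
  have hsw : (starRingEnd ℂ) w = w := by
    simp only [smul_eq_mul] at key
    exact mul_right_cancel₀ hne key
  exact hw (Complex.conj_eq_iff_im.mp hsw)

lemma RMTaux.tele {R : Type*} [CommRing R] (x : R) (q : ℕ) : ∀ p : ℕ,
    (∑ s ∈ range (p+1), (((q+1) + s).choose s : R) * (1-x) * x ^ s)
      = (∑ s ∈ range (p+1), ((q + s).choose s : R) * x ^ s)
        - ((p+q+1).choose p : R) * x^(p+1) := by
  intro p
  induction p with
  | zero => simp
  | succ p ih =>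
    rw [Finset.sum_range_succ, ih, Finset.sum_range_succ (n := p+1)]
    have hpas : (((q+p+1)+1).choose (p+1) : R)
        = ((q+p+1).choose p : R) + ((q+p+1).choose (p+1) : R) := by
      have hn : (q+p+1+1).choose (p+1) = (q+p+1).choose p + (q+p+1).choose (p+1) :=
        Nat.choose_succ_succ _ _
      rw [hn, Nat.cast_add]
    have e1 : q + 1 + (p + 1) = (q+p+1)+1 := by ring
    have e2 : p + 1 + q + 1 = (q+p+1)+1 := by ring
    have e3 : q + (p+1) = q + p + 1 := by ring
    have e4 : p + q + 1 = (q+p+1) := by ring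
    rw [e1, e2, e3, e4]
    linear_combination (x^(p+1)) * hpas

lemma RMTaux.Tlem {R : Type*} [CommRing R] (x : R) (p q : ℕ) :
    (1 : R) = (∑ s ∈ range (q+1), ((p + s).choose s : R) * x ^ (p+1) * (1 - x) ^ s)
      + ∑ s ∈ range (p+1), ((q + s).choose s : R) * (1 - x) ^ (q+1) * x ^ s := by
  induction q with
  | zero =>
    have hg : (∑ i ∈ range (p+1), x ^ i) * (x - 1) = x ^ (p+1) - 1 := geom_sum_mul x (p+1)
    rw [Finset.sum_range_one]
    simp only [Nat.add_zero, Nat.zero_add, Nat.choose_zero_right, Nat.cast_one, one_mul,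
      pow_zero, mul_one, Nat.choose_self, pow_one]
    rw [← Finset.mul_sum]
    linear_combination hg
  | succ q ih =>
    have hBq : (∑ s ∈ range (p+1), ((q+s).choose s : R) * (1-x)^(q+1) * x^s)
        = (1-x)^(q+1) * (∑ s ∈ range (p+1), ((q+s).choose s : R) * x^s) := by
      rw [Finset.mul_sum]; exact Finset.sum_congr rfl (fun s _ => by ring)
    have hBq1 : (∑ s ∈ range (p+1), (((q+1)+s).choose s : R) * (1-x)^(q+1+1) * x^s)
        = (1-x)^(q+1) * (∑ s ∈ range (p+1), (((q+1)+s).choose s : R) * (1-x) * x^s) := by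
      rw [Finset.mul_sum]; exact Finset.sum_congr rfl (fun s _ => by ring)
    have hsymn : (p+q+1).choose p = (p+(q+1)).choose (q+1) := by
      rw [← Nat.choose_symm (by omega : q+1 ≤ p+(q+1))]
      congr 1
      omega
    have hsym : ((p+q+1).choose p : R) = ((p+(q+1)).choose (q+1) : R) := by
      rw [hsymn]
    rw [hBq] at ih
    rw [Finset.sum_range_succ, hBq1, RMTaux.tele x q p]
    linear_combination ih + x^(p+1)*(1-x)^(q+1)*hsym

/-- if `a*b=1` then `a^s * b^n = b^(n-s)` for `s ≤ n`. -/
lemma RMTaux.pow_cancel {M : Type*} [Monoid M] {a b : M} (h : a * b = 1) :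
    ∀ n s : ℕ, s ≤ n → a ^ s * b ^ n = b ^ (n - s) := by
  intro n s
  induction s generalizing n with
  | zero => intro _; simp
  | succ s ih =>
    intro hs
    obtain ⟨k, rfl⟩ : ∃ k, n = k + 1 := ⟨n - 1, by omega⟩
    have h1 : a * b ^ (k+1) = b ^ k := by
      rw [pow_succ' b k, ← mul_assoc, h, one_mul]
    rw [pow_succ a s, mul_assoc, h1, ih k (by omega)]
    congr 1
    omega

lemma RMTaux.commute_inv_right {n : Type*} [Fintype n] [DecidableEq n]
    {a b : Matrix n n ℂ} (h : Commute a b) (hb : IsUnit b.det) : Commute a b⁻¹ := by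
  have h1 : b * b⁻¹ = 1 := Matrix.mul_nonsing_inv _ hb
  have h2 : b⁻¹ * b = 1 := Matrix.nonsing_inv_mul _ hb
  show a * b⁻¹ = b⁻¹ * a
  calc a * b⁻¹ = b⁻¹ * (b * a) * b⁻¹ := by
        rw [show b⁻¹ * (b * a) * b⁻¹ = (b⁻¹ * b) * (a * b⁻¹) by noncomm_ring, h2, one_mul]
    _ = b⁻¹ * (a * b) * b⁻¹ := by rw [← h.eq]
    _ = b⁻¹ * a * (b * b⁻¹) := by noncomm_ring
    _ = b⁻¹ * a := by rw [h1, mul_one]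

lemma RMTaux.conj_pow {M : Type*} [Monoid M] {e x : M} (he : e * e = 1) :
    ∀ k : ℕ, (e * x * e) ^ k = e * x ^ k * e := by
  intro k
  induction k with
  | zero => simp [he]
  | succ k ih =>
    rw [pow_succ, ih, pow_succ]
    calc e * x ^ k * e * (e * x * e) = e * x ^ k * (e * e) * x * e := by noncomm_ring
      _ = e * (x ^ k * x) * e := by rw [he]; noncomm_ring

lemma RMTaux.fromBlocks_pow {n : Type*} [Fintype n] [DecidableEq n]
    (P Q : Matrix n n ℂ) : ∀ k : ℕ,
    (Matrix.fromBlocks P 0 0 Q) ^ k = Matrix.fromBlocks (P ^ k) 0 0 (Q ^ k) := by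
  intro k
  induction k with
  | zero => simp [Matrix.fromBlocks_one]
  | succ k ih =>
    rw [pow_succ, ih, pow_succ, Matrix.fromBlocks_multiply]
    simp [pow_succ]

lemma RMTaux.trace_fromBlocks {n : Type*} [Fintype n]
    (A : Matrix n n ℂ) (B C : Matrix n n ℂ) (D : Matrix n n ℂ) :
    (Matrix.fromBlocks A B C D).trace = A.trace + D.trace := by
  simp [Matrix.trace, Matrix.diag, Fintype.sum_sum_type, Matrix.fromBlocks]

/-- `tr ((AB-λ)⁻ᵐ) = tr ((BA-λ)⁻ᵐ)`. -/
lemma RMTaux.trace_inv_pow_eq {n : Type*} [Fintype n] [DecidableEq n]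
    (A B : Matrix n n ℂ) (lam : ℂ) (hlam : lam ≠ 0)
    (h1 : IsUnit (A * B - lam • 1).det) (h2 : IsUnit (B * A - lam • 1).det) :
    ∀ m : ℕ, (((A * B - lam • 1)⁻¹) ^ m).trace = (((B * A - lam • 1)⁻¹) ^ m).trace := by
  set P := (A * B - lam • 1)⁻¹ with hP
  set Q := (B * A - lam • 1)⁻¹ with hQ
  have hP1 : (A * B - lam • 1) * P = 1 := Matrix.mul_nonsing_inv _ h1
  have hP2 : P * (A * B - lam • 1) = 1 := Matrix.nonsing_inv_mul _ h1
  have hQ1 : (B * A - lam • 1) * Q = 1 := Matrix.mul_nonsing_inv _ h2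
  have hQ2 : Q * (B * A - lam • 1) = 1 := Matrix.nonsing_inv_mul _ h2
  have h0 : (A * B - lam • 1) * A = A * (B * A - lam • 1) := by
    rw [sub_mul, mul_sub, smul_mul_assoc, one_mul, mul_smul_comm, mul_one, mul_assoc]
  have key : P * A = A * Q := by
    have h3 : P * ((A * B - lam • 1) * A) * Q = P * (A * (B * A - lam • 1)) * Q := by rw [h0]
    calc P * A = P * A * ((B * A - lam • 1) * Q) := by rw [hQ1, mul_one]
      _ = P * (A * (B * A - lam • 1)) * Q := by noncomm_ring
      _ = P * ((A * B - lam • 1) * A) * Q := by rw [h0]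
      _ = (P * (A * B - lam • 1)) * (A * Q) := by noncomm_ring
      _ = A * Q := by rw [hP2, one_mul]
  have keypow : ∀ m : ℕ, P ^ m * A = A * Q ^ m := by
    intro m
    induction m with
    | zero => simp
    | succ m ih =>
      rw [pow_succ, pow_succ, mul_assoc, key, ← mul_assoc, ih, mul_assoc]
  have hrec : ∀ m : ℕ, (P ^ m).trace - (Q ^ m).trace
      = lam * ((Q ^ (m+1)).trace - (P ^ (m+1)).trace) := by
    intro m
    have t1 : P ^ (m+1) * (A * B - lam • 1) = P ^ m := by
      rw [pow_succ, mul_assoc, hP2, mul_one]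
    have t2 : Q ^ (m+1) * (B * A - lam • 1) = Q ^ m := by
      rw [pow_succ, mul_assoc, hQ2, mul_one]
    have e1 : (P ^ m).trace = (P ^ (m+1) * (A * B)).trace - lam * (P ^ (m+1)).trace := by
      rw [← t1, mul_sub, Matrix.mul_smul, mul_one, Matrix.trace_sub, Matrix.trace_smul,
        smul_eq_mul]
    have e2 : (Q ^ m).trace = (Q ^ (m+1) * (B * A)).trace - lam * (Q ^ (m+1)).trace := by
      rw [← t2, mul_sub, Matrix.mul_smul, mul_one, Matrix.trace_sub, Matrix.trace_smul,
        smul_eq_mul]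
    have e3 : (P ^ (m+1) * (A * B)).trace = (Q ^ (m+1) * (B * A)).trace := by
      calc (P ^ (m+1) * (A * B)).trace = ((P ^ (m+1) * A) * B).trace := by rw [mul_assoc]
        _ = ((A * Q ^ (m+1)) * B).trace := by rw [keypow]
        _ = (A * (Q ^ (m+1) * B)).trace := by rw [mul_assoc]
        _ = ((Q ^ (m+1) * B) * A).trace := Matrix.trace_mul_comm _ _
        _ = (Q ^ (m+1) * (B * A)).trace := by rw [mul_assoc]
    rw [e1, e2, e3]
    ring
  intro m
  induction m with
  | zero => simp
  | succ m ih =>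
    have := hrec m
    rw [ih, sub_self] at this
    have h4 : (Q ^ (m+1)).trace - (P ^ (m+1)).trace = 0 := by
      rcases mul_eq_zero.mp this.symm with h | h
      · exact absurd h hlam
      · exact h
    exact (sub_eq_zero.mp h4).symm

end helpers

open Finset in
set_option maxHeartbeats 1000000 in
/-- trace identities for chiral resolvents (Lemma 7.5). -/
theorem stmt16 {N : ℕ} (hN : 1 ≤ N) (X : Matrix (Fin N) (Fin N) ℂ) (z w : ℂ)
    (hw : w.im ≠ 0) (n : ℕ) (hn : 1 ≤ n) :
    ntr ((resolv X z w * Em N) ^ (2 * n - 1)) = 0 ∧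
      ntr ((resolv X z w * Em N) ^ (2 * n)) =
        2 * ∑ s ∈ Finset.range n,
          (-1 : ℂ) ^ (s + 1) * (Nat.choose (2 * n - 2 - s) (n - 1) : ℂ) *
            ntr ((resolv X z w) ^ (s + 1)) / (2 * w) ^ (2 * n - s - 1) := by
  classical
  obtain ⟨m, rfl⟩ : ∃ m, n = m + 1 := ⟨n - 1, by omega⟩
  set H : Matrix (Fin N ⊕ Fin N) (Fin N ⊕ Fin N) ℂ := herm X z with hHdef
  set E : Matrix (Fin N ⊕ Fin N) (Fin N ⊕ Fin N) ℂ := Em N with hEdef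
  set A : Matrix (Fin N) (Fin N) ℂ := X - z • 1 with hAdef
  -- basic scalars
  have hw0 : w ≠ 0 := fun h => hw (by simp [h])
  have h2w : (2 * w) ≠ 0 := mul_ne_zero two_ne_zero hw0
  have hw2 : w ^ 2 ≠ 0 := pow_ne_zero _ hw0
  -- hermitian and invertibility
  have hherm : H.IsHermitian := by
    show Hᴴ = H
    rw [hHdef]
    unfold herm
    rw [Matrix.fromBlocks_conjTranspose]
    simp
  have hdet₁ : IsUnit (H - w • 1).det := RMTaux.isUnit_det_sub_smul hherm hw
  have hdet₂ : IsUnit (H + w • 1).det := by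
    have hw' : (-w).im ≠ 0 := by simpa using hw
    have := RMTaux.isUnit_det_sub_smul hherm hw'
    simpa [sub_neg_eq_add] using this
  set G : Matrix (Fin N ⊕ Fin N) (Fin N ⊕ Fin N) ℂ := resolv X z w with hGdef
  set Gh : Matrix (Fin N ⊕ Fin N) (Fin N ⊕ Fin N) ℂ := (H + w • 1)⁻¹ with hGhdef
  have hG1 : (H - w • 1) * G = 1 := Matrix.mul_nonsing_inv _ hdet₁
  have hG2 : G * (H - w • 1) = 1 := Matrix.nonsing_inv_mul _ hdet₁
  have hH1 : (H + w • 1) * Gh = 1 := Matrix.mul_nonsing_inv _ hdet₂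
  have hH2 : Gh * (H + w • 1) = 1 := Matrix.nonsing_inv_mul _ hdet₂
  -- commuting family
  have hc0 : Commute (H - w • 1) (H + w • 1) := by
    have hW : Commute (w • (1 : Matrix (Fin N ⊕ Fin N) (Fin N ⊕ Fin N) ℂ)) H :=
      (Commute.one_left H).smul_left w
    exact ((Commute.refl H).add_right hW.symm).sub_left (hW.add_right (Commute.refl _))
  have hcApG : Commute (H + w • 1) G := RMTaux.commute_inv_right hc0.symm hdet₁
  have hcGGh : Commute G Gh := RMTaux.commute_inv_right hcApG.symm hdet₂
  -- E facts
  have hEE : E * E = 1 := by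
    rw [hEdef]
    unfold Em
    rw [Matrix.fromBlocks_multiply]
    simp [Matrix.fromBlocks_one]
  have hEH : E * H * E = -H := by
    rw [hEdef, hHdef]
    unfold Em herm
    rw [Matrix.fromBlocks_multiply, Matrix.fromBlocks_multiply]
    simp [Matrix.fromBlocks_neg]
  have hEGE : E * G * E = -Gh := by
    have e1 : E * (H - w • 1) * E = -(H + w • 1) := by
      have : E * (H - w • 1) * E = E * H * E - w • (E * E) := by
        rw [mul_sub, sub_mul, Matrix.mul_smul, Matrix.smul_mul, mul_one]
      rw [this, hEH, hEE, neg_add]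
      abel
    have e2 : (-(H + w • 1)) * (E * G * E) = 1 := by
      rw [← e1]
      calc E * (H - w • 1) * E * (E * G * E)
          = E * (H - w • 1) * (E * E) * G * E := by noncomm_ring
        _ = E * ((H - w • 1) * G) * E := by rw [hEE]; noncomm_ring
        _ = E * E := by rw [hG1, mul_one]
        _ = 1 := hEE
    have e3 : (-(H + w • 1)) * (-Gh) = 1 := by rw [neg_mul_neg]; exact hH1
    exact (Matrix.inv_eq_right_inv e2).symm.trans (Matrix.inv_eq_right_inv e3)
  have hEGhE : E * Gh * E = -G := by
    have : E * (E * G * E) * E = E * (-Gh) * E := by rw [hEGE]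
    have h4 : E * (E * G * E) * E = G := by
      calc E * (E * G * E) * E = (E * E) * G * (E * E) := by noncomm_ring
        _ = G := by rw [hEE]; noncomm_ring
    rw [h4] at this
    have : G = -(E * Gh * E) := by
      rw [this]; noncomm_ring
    rw [this]; noncomm_ring
  -- square of G*E
  have hGE2 : (G * E) ^ 2 = (-1 : ℂ) • (G * Gh) := by
    have : (G * E) * (G * E) = G * (E * G * E) := by noncomm_ring
    rw [sq, this, hEGE, neg_one_smul]
    noncomm_ring
  have hGEpow : ∀ k : ℕ, (G * E) ^ (2 * k) = ((-1 : ℂ)) ^ k • (G * Gh) ^ k := by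
    intro k
    rw [pow_mul, hGE2, smul_pow]
  -- trace of Gh powers
  have htrGh : ∀ k : ℕ, (Gh ^ k).trace = (-1 : ℂ) ^ k * (G ^ k).trace := by
    intro k
    have h5 : Gh = (-1 : ℂ) • (E * G * E) := by rw [hEGE, neg_one_smul, neg_neg]
    rw [h5, smul_pow, RMTaux.conj_pow hEE, Matrix.trace_smul, smul_eq_mul]
    congr 1
    calc (E * G ^ k * E).trace = (E * (G ^ k * E)).trace := by rw [mul_assoc]
      _ = ((G ^ k * E) * E).trace := Matrix.trace_mul_comm _ _
      _ = (G ^ k * (E * E)).trace := by rw [mul_assoc]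
      _ = (G ^ k).trace := by rw [hEE, mul_one]
  -- block structure
  have hHsq : H * H = Matrix.fromBlocks (A * Aᴴ) 0 0 (Aᴴ * A) := by
    rw [hHdef, hAdef]
    unfold herm
    rw [Matrix.fromBlocks_multiply]
    simp
  have expand : (H + w • 1) * (H - w • 1)
      = H * H - (w ^ 2) • (1 : Matrix (Fin N ⊕ Fin N) (Fin N ⊕ Fin N) ℂ) := by
    rw [add_mul, mul_sub, mul_sub]
    simp only [Matrix.mul_smul, Matrix.smul_mul, mul_one, one_mul, smul_smul]
    rw [pow_two]
    abel
  have hsmul1 : ((w ^ 2) • (1 : Matrix (Fin N ⊕ Fin N) (Fin N ⊕ Fin N) ℂ))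
      = Matrix.fromBlocks ((w ^ 2) • 1) 0 0 ((w ^ 2) • 1) := by
    rw [← Matrix.fromBlocks_one, Matrix.fromBlocks_smul]
    simp
  have hfact : (H + w • 1) * (H - w • 1)
      = Matrix.fromBlocks (A * Aᴴ - (w ^ 2) • 1) 0 0 (Aᴴ * A - (w ^ 2) • 1) := by
    rw [expand, hHsq, hsmul1, sub_eq_add_neg, Matrix.fromBlocks_neg, Matrix.fromBlocks_add]
    simp [sub_eq_add_neg]
  have hdetprod : IsUnit ((Matrix.fromBlocks (A * Aᴴ - (w ^ 2) • 1) 0 0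
      (Aᴴ * A - (w ^ 2) • 1)).det) := by
    rw [← hfact, Matrix.det_mul]
    exact hdet₂.mul hdet₁
  have hdetP : IsUnit (A * Aᴴ - (w ^ 2) • 1).det := by
    rw [Matrix.det_fromBlocks_zero₂₁] at hdetprod
    exact isUnit_of_mul_isUnit_left hdetprod
  have hdetQ : IsUnit (Aᴴ * A - (w ^ 2) • 1).det := by
    rw [Matrix.det_fromBlocks_zero₂₁] at hdetprod
    exact isUnit_of_mul_isUnit_right hdetprod
  have hGinv : G = (H - w • 1)⁻¹ := rfl
  have hGGhB : G * Gh = Matrix.fromBlocks ((A * Aᴴ - (w ^ 2) • 1)⁻¹) 0 0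
      ((Aᴴ * A - (w ^ 2) • 1)⁻¹) := by
    have h6 : G * Gh = ((H + w • 1) * (H - w • 1))⁻¹ := by
      rw [Matrix.mul_inv_rev, hGinv, hGhdef]
    rw [h6, hfact]
    refine Matrix.inv_eq_right_inv ?_
    rw [Matrix.fromBlocks_multiply]
    simp [Matrix.mul_nonsing_inv _ hdetP, Matrix.mul_nonsing_inv _ hdetQ,
      Matrix.fromBlocks_one]
  have htrGGhE : ∀ k : ℕ, ((G * Gh) ^ k * E).trace = 0 := by
    intro k
    rw [hGGhB, RMTaux.fromBlocks_pow, hEdef]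
    unfold Em
    rw [Matrix.fromBlocks_multiply]
    simp only [mul_one, mul_zero, zero_mul, zero_add, add_zero, mul_neg, Matrix.mul_zero,
      Matrix.zero_mul, Matrix.mul_one]
    rw [RMTaux.trace_fromBlocks]
    have h7 := RMTaux.trace_inv_pow_eq A Aᴴ (w ^ 2) hw2 hdetP hdetQ k
    rw [Matrix.trace_neg, h7]
    ring
  -- part (i)
  have hEGGhE : E * (G * Gh) * E = G * Gh := by
    calc E * (G * Gh) * E = (E * G * E) * (E * Gh * E) := by
          rw [show (E*G*E)*(E*Gh*E) = E*G*(E*E)*Gh*E from by noncomm_ring, hEE]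
          noncomm_ring
      _ = (-Gh) * (-G) := by rw [hEGE, hEGhE]
      _ = Gh * G := neg_mul_neg _ _
      _ = G * Gh := hcGGh.eq.symm
  have part1 : ∀ k : ℕ, ((G * Gh) ^ k * (G * E)).trace = 0 := by
    intro k
    set K : Matrix (Fin N ⊕ Fin N) (Fin N ⊕ Fin N) ℂ := (G * Gh) ^ (k+1) with hK
    have h9 : (G * Gh) ^ k * G = K * (H + w • 1) := by
      rw [hK, pow_succ, mul_assoc, mul_assoc, hH2, mul_one]
    have hEKE : E * K * E = K := by
      rw [hK, ← RMTaux.conj_pow hEE, hEGGhE]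
    have hEK : E * K = K * E := by
      calc E * K = E * K * (E * E) := by rw [hEE, mul_one]
        _ = (E * K * E) * E := by noncomm_ring
        _ = K * E := by rw [hEKE]
    have hEHm : E * H = -(H * E) := by
      calc E * H = E * H * (E * E) := by rw [hEE, mul_one]
        _ = (E * H * E) * E := by noncomm_ring
        _ = -(H * E) := by rw [hEH]; noncomm_ring
    have hKH : (K * (H * E)).trace = 0 := by
      have hflip : (K * (H * E)).trace = -(K * (H * E)).trace := by
        calc (K * (H * E)).trace = ((K * H) * E).trace := by rw [mul_assoc]
          _ = (E * (K * H)).trace := (Matrix.trace_mul_comm _ _).symm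
          _ = ((E * K) * H).trace := by rw [mul_assoc]
          _ = ((K * E) * H).trace := by rw [hEK]
          _ = (K * (E * H)).trace := by rw [mul_assoc]
          _ = (K * -(H * E)).trace := by rw [hEHm]
          _ = -(K * (H * E)).trace := by rw [mul_neg, Matrix.trace_neg]
      have h2t : (K * (H * E)).trace + (K * (H * E)).trace = 0 := by
        nth_rewrite 1 [hflip]; ring
      exact add_self_eq_zero.mp h2t
    have hsplit : (G * Gh) ^ k * (G * E) = K * (H * E) + w • (K * E) := by
      calc (G * Gh) ^ k * (G * E) = ((G * Gh) ^ k * G) * E := by rw [mul_assoc]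
        _ = (K * (H + w • 1)) * E := by rw [h9]
        _ = K * (H * E) + w • (K * E) := by
            rw [mul_add, Matrix.mul_smul, mul_one, add_mul, Matrix.smul_mul, mul_assoc]
    rw [hsplit, Matrix.trace_add, Matrix.trace_smul, hKH, htrGGhE (k+1), smul_zero, add_zero]
  -- part (ii): polynomial expansion
  set c2 : ℂ := (2 * w)⁻¹ with hc2
  set Xp : Matrix (Fin N ⊕ Fin N) (Fin N ⊕ Fin N) ℂ := c2 • (H + w • 1) with hXp
  have h1mX : (1 : Matrix (Fin N ⊕ Fin N) (Fin N ⊕ Fin N) ℂ) - Xp = (-c2) • (H - w • 1) := by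
    have h2 : ((2 * w) : ℂ) • (1 : Matrix (Fin N ⊕ Fin N) (Fin N ⊕ Fin N) ℂ) - (H + w • 1)
        = -(H - w • 1) := by
      rw [two_mul, add_smul]; abel
    have ha : (1 : Matrix (Fin N ⊕ Fin N) (Fin N ⊕ Fin N) ℂ)
        = c2 • (((2 * w) : ℂ) • (1 : Matrix (Fin N ⊕ Fin N) (Fin N ⊕ Fin N) ℂ)) := by
      rw [smul_smul, hc2, inv_mul_cancel₀ h2w, one_smul]
    calc (1 : Matrix (Fin N ⊕ Fin N) (Fin N ⊕ Fin N) ℂ) - Xp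
        = c2 • (((2 * w) : ℂ) • (1 : Matrix (Fin N ⊕ Fin N) (Fin N ⊕ Fin N) ℂ))
            - c2 • (H + w • 1) := by rw [← ha, hXp]
      _ = c2 • ((((2 * w) : ℂ) • (1 : Matrix (Fin N ⊕ Fin N) (Fin N ⊕ Fin N) ℂ))
            - (H + w • 1)) := (smul_sub _ _ _).symm
      _ = c2 • (-(H - w • 1)) := by rw [h2]
      _ = (-c2) • (H - w • 1) := by rw [smul_neg, neg_smul]
  have hcast : ∀ k : ℕ, ((k : ℕ) : Matrix (Fin N ⊕ Fin N) (Fin N ⊕ Fin N) ℂ)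
      = ((k : ℂ)) • (1 : Matrix (Fin N ⊕ Fin N) (Fin N ⊕ Fin N) ℂ) := by
    intro k
    rw [← map_natCast (algebraMap ℂ (Matrix (Fin N ⊕ Fin N) (Fin N ⊕ Fin N) ℂ)) k,
      Algebra.algebraMap_eq_smul_one]
  have core1 : ∀ s : ℕ, s ≤ m →
      ((H + w • 1) ^ (m+1) * (H - w • 1) ^ s) * (G ^ (m+1) * Gh ^ (m+1)) = G ^ (m+1-s) := by
    intro s hs
    have e1 : (H - w • 1) ^ s * G ^ (m+1) = G ^ (m+1-s) :=
      RMTaux.pow_cancel hG1 (m+1) s (by omega)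
    have e2 : (H + w • 1) ^ (m+1) * Gh ^ (m+1) = 1 := by
      have := RMTaux.pow_cancel hH1 (m+1) (m+1) le_rfl
      simpa using this
    calc ((H + w • 1) ^ (m+1) * (H - w • 1) ^ s) * (G ^ (m+1) * Gh ^ (m+1))
        = (H + w • 1) ^ (m+1) * ((H - w • 1) ^ s * G ^ (m+1)) * Gh ^ (m+1) := by noncomm_ring
      _ = (H + w • 1) ^ (m+1) * G ^ (m+1-s) * Gh ^ (m+1) := by rw [e1]
      _ = G ^ (m+1-s) * ((H + w • 1) ^ (m+1) * Gh ^ (m+1)) := by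
          rw [(hcApG.pow_pow (m+1) (m+1-s)).eq, mul_assoc]
      _ = G ^ (m+1-s) := by rw [e2, mul_one]
  have core2 : ∀ s : ℕ, s ≤ m →
      ((H - w • 1) ^ (m+1) * (H + w • 1) ^ s) * (G ^ (m+1) * Gh ^ (m+1)) = Gh ^ (m+1-s) := by
    intro s hs
    have e1 : (H + w • 1) ^ s * Gh ^ (m+1) = Gh ^ (m+1-s) :=
      RMTaux.pow_cancel hH1 (m+1) s (by omega)
    have e2 : (H - w • 1) ^ (m+1) * G ^ (m+1) = 1 := by
      have := RMTaux.pow_cancel hG1 (m+1) (m+1) le_rfl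
      simpa using this
    calc ((H - w • 1) ^ (m+1) * (H + w • 1) ^ s) * (G ^ (m+1) * Gh ^ (m+1))
        = (H - w • 1) ^ (m+1) * ((H + w • 1) ^ s * G ^ (m+1)) * Gh ^ (m+1) := by noncomm_ring
      _ = (H - w • 1) ^ (m+1) * (G ^ (m+1) * (H + w • 1) ^ s) * Gh ^ (m+1) := by
          rw [(hcApG.pow_pow s (m+1)).eq]
      _ = ((H - w • 1) ^ (m+1) * G ^ (m+1)) * ((H + w • 1) ^ s * Gh ^ (m+1)) := by noncomm_ring
      _ = 1 * Gh ^ (m+1-s) := by rw [e1, e2]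
      _ = Gh ^ (m+1-s) := one_mul _
  have term1 : ∀ s : ℕ, s ≤ m →
      ((((m+s).choose s : Matrix (Fin N ⊕ Fin N) (Fin N ⊕ Fin N) ℂ)) * Xp ^ (m+1)
          * (1 - Xp) ^ s) * (G ^ (m+1) * Gh ^ (m+1))
        = (((m+s).choose s : ℂ) * (-1 : ℂ) ^ s * c2 ^ (m+1+s)) • G ^ (m+1-s) := by
    intro s hs
    rw [h1mX, hXp, hcast, ← core1 s hs]
    rw [smul_pow, smul_pow]
    simp only [Matrix.smul_mul, Matrix.mul_smul, smul_smul, one_mul]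
    rw [mul_assoc]
    congr 1
    rw [neg_pow, pow_add]
    ring
  have term2 : ∀ s : ℕ, s ≤ m →
      ((((m+s).choose s : Matrix (Fin N ⊕ Fin N) (Fin N ⊕ Fin N) ℂ)) * (1 - Xp) ^ (m+1)
          * Xp ^ s) * (G ^ (m+1) * Gh ^ (m+1))
        = (((m+s).choose s : ℂ) * (-1 : ℂ) ^ (m+1) * c2 ^ (m+1+s)) • Gh ^ (m+1-s) := by
    intro s hs
    rw [h1mX, hXp, hcast, ← core2 s hs]
    rw [smul_pow, smul_pow]
    simp only [Matrix.smul_mul, Matrix.mul_smul, smul_smul, one_mul]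
    rw [mul_assoc]
    congr 1
    rw [neg_pow, pow_add]
    ring
  have TT := RMTaux.Tlem (Polynomial.X : Polynomial ℂ) m m
  have TT2 := congrArg (Polynomial.aeval Xp) TT
  simp only [_root_.map_one, _root_.map_add, map_sum, _root_.map_mul, map_pow, _root_.map_sub,
    Polynomial.aeval_X, map_natCast] at TT2
  have step1 : (G * Gh) ^ (m+1)
      = (∑ s ∈ range (m+1), ((((m+s).choose s : Matrix (Fin N ⊕ Fin N) (Fin N ⊕ Fin N) ℂ))
            * Xp ^ (m+1) * (1 - Xp) ^ s) * (G ^ (m+1) * Gh ^ (m+1)))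
        + ∑ s ∈ range (m+1), ((((m+s).choose s : Matrix (Fin N ⊕ Fin N) (Fin N ⊕ Fin N) ℂ))
            * (1 - Xp) ^ (m+1) * Xp ^ s) * (G ^ (m+1) * Gh ^ (m+1)) := by
    rw [← Finset.sum_mul, ← Finset.sum_mul, ← add_mul, ← TT2, one_mul, hcGGh.mul_pow]
  have main : ((G * Gh) ^ (m+1)).trace
      = ∑ s ∈ range (m+1), 2 * ((m+s).choose s : ℂ) * (-1 : ℂ) ^ s
          * c2 ^ (m+1+s) * (G ^ (m+1-s)).trace := by
    rw [step1, Matrix.trace_add, Matrix.trace_sum, Matrix.trace_sum, ← Finset.sum_add_distrib]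
    refine Finset.sum_congr rfl ?_
    intro s hs
    have hsm : s ≤ m := by
      have := Finset.mem_range.mp hs
      omega
    rw [term1 s hsm, term2 s hsm, Matrix.trace_smul, Matrix.trace_smul, smul_eq_mul,
      smul_eq_mul, htrGh (m+1-s)]
    have hsign : ((-1 : ℂ)) ^ (m+1) * (-1 : ℂ) ^ (m+1-s) = (-1 : ℂ) ^ s := by
      rw [← pow_add]
      have h10 : m+1 + (m+1-s) = s + 2*(m+1-s) := by omega
      rw [h10, pow_add, pow_mul, neg_one_sq, one_pow, mul_one]
    calc ((m+s).choose s : ℂ) * (-1:ℂ)^s * c2 ^ (m+1+s) * (G ^ (m+1-s)).trace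
          + ((m+s).choose s : ℂ) * (-1:ℂ)^(m+1) * c2 ^ (m+1+s)
            * ((-1:ℂ)^(m+1-s) * (G ^ (m+1-s)).trace)
        = ((m+s).choose s : ℂ) * ((-1:ℂ)^s + (-1:ℂ)^(m+1) * (-1:ℂ)^(m+1-s)) * c2 ^ (m+1+s)
            * (G ^ (m+1-s)).trace := by ring
      _ = _ := by rw [hsign]; ring
  constructor
  · -- odd traces vanish
    have h8 : 2 * (m+1) - 1 = 2 * m + 1 := by omega
    rw [h8, pow_succ, hGEpow m]
    simp only [ntr]
    rw [Matrix.smul_mul, Matrix.trace_smul, part1 m, smul_zero, mul_zero]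
  · -- even traces
    rw [hGEpow (m+1)]
    simp only [ntr]
    rw [Matrix.trace_smul, smul_eq_mul]
    conv_lhs => rw [main, Finset.mul_sum, Finset.mul_sum]
    conv_rhs => rw [← Finset.sum_range_reflect, Finset.mul_sum]
    refine Finset.sum_congr rfl ?_
    intro j hj
    have hjm : j ≤ m := by
      have := Finset.mem_range.mp hj
      omega
    have e1 : m + 1 - 1 - j = m - j := by omega
    rw [e1]
    have e2 : 2*(m+1) - 2 - (m-j) = m + j := by omega
    have e3 : m - j + 1 = m + 1 - j := by omega
    have e4 : 2*(m+1) - (m-j) - 1 = m+1+j := by omega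
    have e5 : m + 1 - 1 = m := by omega
    rw [e2, e3, e4, e5]
    have hchoose : ((m+j).choose m : ℂ) = ((m+j).choose j : ℂ) := by
      have hcc : (m+j).choose m = (m+j).choose j := by
        rw [← Nat.choose_symm (by omega : j ≤ m+j)]
        congr 1
        omega
      rw [hcc]
    rw [hchoose]
    have hsgn : ((-1:ℂ))^(m+1-j) = (-1:ℂ)^(m+1) * (-1:ℂ)^j := by
      rw [← pow_add]
      have h11 : m+1+j = (m+1-j) + 2*j := by omega
      rw [h11, pow_add, pow_mul, neg_one_sq, one_pow, mul_one]
    rw [hsgn, hc2, div_eq_mul_inv, ← inv_pow]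
    ring


end RMT

end
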